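/- A finite undirected labelled graph H of dimension 3 is isomorphic to gad(G) for some strict linear order G if and only if H satisfies conditions φ₁, φ₂, φ₃, and φ₄. -/

import Mathlib

/-- A strict linear order on a type `V`: an irreflexive, transitive and total
binary relation. -/
def IsStrictLinearOrderRel {V : Type} (E : V → V → Prop) : Prop :=
  (∀ v, ¬ E v v) ∧ (∀ u v w, E u v → E v w → E u w) ∧ (∀ u v : V, u ≠ v → E u v ∨ E v u)

/-- Vertices of the gadgetisation of a directed graph `(V, E)`: a node `v¹_u` for every
`u : V` (left summand) and, for every edge `e` of `E`, a node `v²_e` (right summand with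
second component `false`) and a node `v³_e` (second component `true`). -/
def GadV {V : Type} (E : V → V → Prop) : Type :=
  V ⊕ ({p : V × V // E p.1 p.2} × Bool)

/-- The (symmetric) adjacency relation of the gadgetisation: every edge `(u,w)` of the
original graph is replaced by the undirected path `v¹_u — v²_{(u,w)} — v³_{(u,w)} — v¹_w`. -/
def gadAdj {V : Type} (E : V → V → Prop) : GadV E → GadV E → Prop
  | Sum.inl u, Sum.inr (e, b) => (b = false ∧ e.val.1 = u) ∨ (b = true ∧ e.val.2 = u)
  | Sum.inr (e, b), Sum.inl u => (b = false ∧ e.val.1 = u) ∨ (b = true ∧ e.val.2 = u)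
  | Sum.inr (e, b), Sum.inr (e', b') => e = e' ∧ b ≠ b'
  | Sum.inl _, Sum.inl _ => False

/-- The labelling of the gadgetisation: `v¹`-nodes get label `(1,0,0)`, `v²`-nodes get
`(0,1,0)` and `v³`-nodes get `(0,0,1)`. -/
def gadLab {V : Type} (E : V → V → Prop) : GadV E → Fin 3 → Bool
  | Sum.inl _ => fun i => decide (i = 0)
  | Sum.inr (_, false) => fun i => decide (i = 1)
  | Sum.inr (_, true) => fun i => decide (i = 2)

noncomputable instance GadV.fintype {V : Type} [Fintype V] (E : V → V → Prop) :
    Fintype (GadV E) := by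
  classical
  unfold GadV
  infer_instance

/-- An isomorphism of labelled graphs: an edge-preserving and label-preserving bijection. -/
def IsoLabGraph {V₁ V₂ : Type} {d : ℕ} (E₁ : V₁ → V₁ → Prop) (lab₁ : V₁ → Fin d → Bool)
    (E₂ : V₂ → V₂ → Prop) (lab₂ : V₂ → Fin d → Bool) : Prop :=
  ∃ f : V₁ ≃ V₂, (∀ u v, E₁ u v ↔ E₂ (f u) (f v)) ∧ ∀ v, lab₁ v = lab₂ (f v)

/-- `(W, EH, labH)` is isomorphic to the gadgetisation of some (finite) strict linear
order. -/
def IsGadLin {W : Type} (EH : W → W → Prop) (labH : W → Fin 3 → Bool) : Prop :=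
  ∃ (U : Type) (_ : Fintype U) (R : U → U → Prop),
    IsStrictLinearOrderRel R ∧ IsoLabGraph EH labH (gadAdj R) (gadLab R)

/-- A gadgetised path from `u` to `z` via `w` (a `P₂` node) and `v` (a `P₃` node). -/
def GadPath {V : Type} (E : V → V → Prop) (lab : V → Fin 3 → Bool) (u w v z : V) : Prop :=
  lab u 0 = true ∧ lab w 1 = true ∧ lab v 2 = true ∧ lab z 0 = true ∧
    E u w ∧ E w v ∧ E v z

/-- There is a gadgetised edge from `u` to `z`. -/
def GadEdge {V : Type} (E : V → V → Prop) (lab : V → Fin 3 → Bool) (u z : V) : Prop :=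
  ∃ w v, GadPath E lab u w v z

/-- Condition φ₁: every node satisfies exactly one of `P₁, P₂, P₃`. -/
def phi1 {V : Type} (lab : V → Fin 3 → Bool) : Prop :=
  ∀ v : V,
    (lab v 0 = true ∧ lab v 1 = false ∧ lab v 2 = false) ∨
    (lab v 0 = false ∧ lab v 1 = true ∧ lab v 2 = false) ∨
    (lab v 0 = false ∧ lab v 1 = false ∧ lab v 2 = true)

/-- Condition φ₂: every `P₂`-node has exactly two neighbours, exactly one of them a
`P₁`-node and exactly one a `P₃`-node; every `P₃`-node has exactly two neighbours, exactly
one a `P₁`-node and exactly one a `P₂`-node; and no two `P₁`-nodes are adjacent. -/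
def phi2 {V : Type} [Fintype V] (E : V → V → Prop) (lab : V → Fin 3 → Bool) : Prop :=
  (∀ v : V, lab v 1 = true →
    Nat.card {w | E v w} = 2 ∧ Nat.card {w | E v w ∧ lab w 0 = true} = 1 ∧
      Nat.card {w | E v w ∧ lab w 2 = true} = 1) ∧
  (∀ v : V, lab v 2 = true →
    Nat.card {w | E v w} = 2 ∧ Nat.card {w | E v w ∧ lab w 0 = true} = 1 ∧
      Nat.card {w | E v w ∧ lab w 1 = true} = 1) ∧
  (∀ u v : V, lab u 0 = true → lab v 0 = true → ¬ E u v)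

/-- Condition φ₃: between any two distinct `P₁`-nodes there is exactly one gadgetised edge
in total (from `u` to `z` or from `z` to `u`). -/
def phi3 {V : Type} [Fintype V] (E : V → V → Prop) (lab : V → Fin 3 → Bool) : Prop :=
  ∀ u z : V, lab u 0 = true → lab z 0 = true → u ≠ z →
    Nat.card {p : V × V | GadPath E lab u p.1 p.2 z} +
      Nat.card {p : V × V | GadPath E lab z p.1 p.2 u} = 1

/-- Condition φ₄: there is no triangle of gadgetised edges. -/
def phi4 {V : Type} (E : V → V → Prop) (lab : V → Fin 3 → Bool) : Prop :=
  ¬ ∃ u v w : V, GadEdge E lab u v ∧ GadEdge E lab v w ∧ GadEdge E lab w u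

/-- `N₂ u`: the number of neighbours of `u` satisfying `P₂`. -/
noncomputable def N2 {V : Type} [Fintype V] (E : V → V → Prop) (lab : V → Fin 3 → Bool)
    (u : V) : ℕ :=
  Nat.card {w | E u w ∧ lab w 1 = true}

/-- Condition ψ: for all `0 ≤ i < j < |P₁|` there are `P₁`-nodes `u, w` with `N₂ u = j`,
`N₂ w = i` and a gadgetised edge from `u` to `w`. -/
def psiCond {V : Type} [Fintype V] (E : V → V → Prop) (lab : V → Fin 3 → Bool) : Prop :=
  ∀ i j : ℕ, i < j → j < Nat.card {v : V | lab v 0 = true} →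
    ∃ u w : V, lab u 0 = true ∧ lab w 0 = true ∧
      N2 E lab u = j ∧ N2 E lab w = i ∧ GadEdge E lab u w

section GadgetSide
variable {U : Type} (R : U → U → Prop)

lemma gadLab_inl (u : U) : gadLab R (Sum.inl u) = fun i => decide (i = 0) := rfl
lemma gadLab_inrf (e) : gadLab R (Sum.inr (e, false)) = fun i => decide (i = 1) := rfl
lemma gadLab_inrt (e) : gadLab R (Sum.inr (e, true)) = fun i => decide (i = 2) := rfl

lemma gadPath_iff (a b : U) (w v : GadV R) :
    GadPath (gadAdj R) (gadLab R) (Sum.inl a) w v (Sum.inl b) ↔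
      ∃ h : R a b, w = Sum.inr (⟨(a,b),h⟩, false) ∧ v = Sum.inr (⟨(a,b),h⟩, true) := by
  constructor
  · rintro ⟨-, hw, hv, -, e1, e2, e3⟩
    rcases w with wa | ⟨⟨⟨p1, p2⟩, hp⟩, wb⟩
    · simp [gadLab] at hw
    · rcases wb
      · rcases v with va | ⟨ve, vb⟩
        · simp [gadLab] at hv
        · rcases vb
          · simp [gadLab] at hv
          · simp only [gadAdj] at e1 e2 e3
            have hwe1 : p1 = a := by
              rcases e1 with ⟨-, h⟩ | ⟨h, -⟩
              · exact h
              · simp at h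
            obtain ⟨rfl, -⟩ := e2
            have hve2 : p2 = b := by
              rcases e3 with ⟨h, -⟩ | ⟨-, h⟩
              · simp at h
              · exact h
            subst hwe1; subst hve2
            exact ⟨hp, rfl, rfl⟩
      · simp [gadLab] at hw
  · rintro ⟨h, rfl, rfl⟩
    refine ⟨rfl, rfl, rfl, rfl, ?_, ?_, ?_⟩ <;> simp [gadAdj]

lemma GadV.inl_eq_inl {a b : U} : @Eq (GadV R) (Sum.inl a) (Sum.inl b) ↔ a = b :=
  ⟨fun h => by injection h, fun h => by rw [h]⟩

lemma GadV.inr_eq_inr {x y : {p : U × U // R p.1 p.2} × Bool} :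
    @Eq (GadV R) (Sum.inr x) (Sum.inr y) ↔ x = y :=
  ⟨fun h => by injection h, fun h => by rw [h]⟩

lemma GadV.inl_ne_inr {a : U} {x : {p : U × U // R p.1 p.2} × Bool} :
    @Ne (GadV R) (Sum.inl a) (Sum.inr x) := fun h => by injection h

lemma GadV.inr_ne_inl {a : U} {x : {p : U × U // R p.1 p.2} × Bool} :
    @Ne (GadV R) (Sum.inr x) (Sum.inl a) := fun h => by injection h

lemma gadEdge_iff (x y : GadV R) :
    GadEdge (gadAdj R) (gadLab R) x y ↔ ∃ a b, R a b ∧ x = Sum.inl a ∧ y = Sum.inl b := by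
  constructor
  · rintro ⟨w, v, hp⟩
    rcases x with a | ⟨e, b⟩
    · rcases y with b' | ⟨e, b⟩
      · exact ⟨a, b', ((gadPath_iff R a b' w v).1 hp).choose, rfl, rfl⟩
      · rcases b <;> simp [GadPath, gadLab] at hp
    · rcases b <;> simp [GadPath, gadLab] at hp
  · rintro ⟨a, b, h, rfl, rfl⟩
    exact ⟨_, _, (gadPath_iff R a b _ _).2 ⟨h, rfl, rfl⟩⟩

lemma card_path_one (a b : U) (h : R a b) :
    Nat.card {p : GadV R × GadV R |
      GadPath (gadAdj R) (gadLab R) (Sum.inl a) p.1 p.2 (Sum.inl b)} = 1 := by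
  have hs : {p : GadV R × GadV R |
      GadPath (gadAdj R) (gadLab R) (Sum.inl a) p.1 p.2 (Sum.inl b)} =
      {(Sum.inr (⟨(a,b),h⟩, false), Sum.inr (⟨(a,b),h⟩, true))} := by
    ext p
    simp only [Set.mem_setOf_eq, gadPath_iff, Set.mem_singleton_iff, Prod.ext_iff]
    exact ⟨fun ⟨_, h1, h2⟩ => Prod.ext h1 h2, fun hp => ⟨h, by rw [hp], by rw [hp]⟩⟩
  rw [Nat.card_coe_set_eq, hs]
  exact Set.ncard_singleton _

lemma card_path_zero (a b : U) (h : ¬ R a b) :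
    Nat.card {p : GadV R × GadV R |
      GadPath (gadAdj R) (gadLab R) (Sum.inl a) p.1 p.2 (Sum.inl b)} = 0 := by
  have hs : {p : GadV R × GadV R |
      GadPath (gadAdj R) (gadLab R) (Sum.inl a) p.1 p.2 (Sum.inl b)} = ∅ := by
    ext p
    simp only [Set.mem_setOf_eq, gadPath_iff, Set.mem_empty_iff_false, iff_false]
    rintro ⟨h', -⟩
    exact h h'
  rw [Nat.card_coe_set_eq, hs, Set.ncard_empty]

theorem gad_phi1 : phi1 (gadLab R) := by
  rintro (a | ⟨e, b⟩)
  · exact Or.inl (by simp [gadLab])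
  · rcases b
    · exact Or.inr (Or.inl (by simp [gadLab]))
    · exact Or.inr (Or.inr (by simp [gadLab]))

theorem gad_phi2 [Fintype U] : phi2 (gadAdj R) (gadLab R) := by
  refine ⟨?_, ?_, ?_⟩
  · rintro (a | ⟨e, b⟩) hv
    · simp [gadLab] at hv
    rcases b
    · have h1 : {w | gadAdj R (Sum.inr (e, false)) w} =
          {Sum.inl e.val.1, Sum.inr (e, true)} := by
        ext x
        show gadAdj R _ x ↔ x = _ ∨ x = _
        rcases x with u | ⟨e', b'⟩
        · simp [gadAdj, GadV.inl_eq_inl, GadV.inr_eq_inr, GadV.inl_ne_inr, GadV.inr_ne_inl,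
            Prod.ext_iff]
          exact eq_comm
        · rcases b' <;>
            simp [gadAdj, GadV.inl_eq_inl, GadV.inr_eq_inr, GadV.inl_ne_inr, GadV.inr_ne_inl,
              Prod.ext_iff] <;> tauto
      have h2 : {w | gadAdj R (Sum.inr (e, false)) w ∧ gadLab R w 0 = true} =
          {Sum.inl e.val.1} := by
        ext x
        show gadAdj R _ x ∧ gadLab R x _ = true ↔ x = _
        rcases x with u | ⟨e', b'⟩
        · simp [gadAdj, gadLab, GadV.inl_eq_inl, GadV.inr_eq_inr, GadV.inl_ne_inr,
            GadV.inr_ne_inl, Prod.ext_iff]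
          exact eq_comm
        · rcases b' <;>
            simp [gadAdj, gadLab, GadV.inl_eq_inl, GadV.inr_eq_inr, GadV.inl_ne_inr,
              GadV.inr_ne_inl, Prod.ext_iff]
      have h3 : {w | gadAdj R (Sum.inr (e, false)) w ∧ gadLab R w 2 = true} =
          {Sum.inr (e, true)} := by
        ext x
        show gadAdj R _ x ∧ gadLab R x _ = true ↔ x = _
        rcases x with u | ⟨e', b'⟩
        · simp [gadAdj, gadLab, GadV.inl_eq_inl, GadV.inr_eq_inr, GadV.inl_ne_inr,
            GadV.inr_ne_inl, Prod.ext_iff]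
        · rcases b' <;>
            simp [gadAdj, gadLab, GadV.inl_eq_inl, GadV.inr_eq_inr, GadV.inl_ne_inr,
              GadV.inr_ne_inl, Prod.ext_iff] <;> tauto
      refine ⟨?_, ?_, ?_⟩
      · rw [Nat.card_coe_set_eq, h1]
        exact Set.ncard_pair (GadV.inl_ne_inr R)
      · rw [Nat.card_coe_set_eq, h2]
        exact Set.ncard_singleton _
      · rw [Nat.card_coe_set_eq, h3]
        exact Set.ncard_singleton _
    · simp [gadLab] at hv
  · rintro (a | ⟨e, b⟩) hv
    · simp [gadLab] at hv
    rcases b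
    · simp [gadLab] at hv
    · have h1 : {w | gadAdj R (Sum.inr (e, true)) w} =
          {Sum.inl e.val.2, Sum.inr (e, false)} := by
        ext x
        show gadAdj R _ x ↔ x = _ ∨ x = _
        rcases x with u | ⟨e', b'⟩
        · simp [gadAdj, GadV.inl_eq_inl, GadV.inr_eq_inr, GadV.inl_ne_inr, GadV.inr_ne_inl,
            Prod.ext_iff]
          exact eq_comm
        · rcases b' <;>
            simp [gadAdj, GadV.inl_eq_inl, GadV.inr_eq_inr, GadV.inl_ne_inr, GadV.inr_ne_inl,
              Prod.ext_iff] <;> tauto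
      have h2 : {w | gadAdj R (Sum.inr (e, true)) w ∧ gadLab R w 0 = true} =
          {Sum.inl e.val.2} := by
        ext x
        show gadAdj R _ x ∧ gadLab R x _ = true ↔ x = _
        rcases x with u | ⟨e', b'⟩
        · simp [gadAdj, gadLab, GadV.inl_eq_inl, GadV.inr_eq_inr, GadV.inl_ne_inr,
            GadV.inr_ne_inl, Prod.ext_iff]
          exact eq_comm
        · rcases b' <;>
            simp [gadAdj, gadLab, GadV.inl_eq_inl, GadV.inr_eq_inr, GadV.inl_ne_inr,
              GadV.inr_ne_inl, Prod.ext_iff]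
      have h3 : {w | gadAdj R (Sum.inr (e, true)) w ∧ gadLab R w 1 = true} =
          {Sum.inr (e, false)} := by
        ext x
        show gadAdj R _ x ∧ gadLab R x _ = true ↔ x = _
        rcases x with u | ⟨e', b'⟩
        · simp [gadAdj, gadLab, GadV.inl_eq_inl, GadV.inr_eq_inr, GadV.inl_ne_inr,
            GadV.inr_ne_inl, Prod.ext_iff]
        · rcases b' <;>
            simp [gadAdj, gadLab, GadV.inl_eq_inl, GadV.inr_eq_inr, GadV.inl_ne_inr,
              GadV.inr_ne_inl, Prod.ext_iff] <;> tauto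
      refine ⟨?_, ?_, ?_⟩
      · rw [Nat.card_coe_set_eq, h1]
        exact Set.ncard_pair (GadV.inl_ne_inr R)
      · rw [Nat.card_coe_set_eq, h2]
        exact Set.ncard_singleton _
      · rw [Nat.card_coe_set_eq, h3]
        exact Set.ncard_singleton _
  · rintro (a | ⟨e, b⟩) (a' | ⟨e', b'⟩) hu hv h
    · exact h
    · rcases b' <;> simp [gadLab] at hv
    · rcases b <;> simp [gadLab] at hu
    · rcases b <;> simp [gadLab] at hu

theorem gad_phi3 [Fintype U] (h : IsStrictLinearOrderRel R) :
    phi3 (gadAdj R) (gadLab R) := by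
  obtain ⟨hirr, htr, hto⟩ := h
  have hnot : ∀ x y : U, R x y → ¬ R y x := fun x y h1 h2 => hirr x (htr _ _ _ h1 h2)
  rintro (a | ⟨e, b⟩) z hu hz hne
  swap
  · rcases b <;> simp [gadLab] at hu
  rcases z with b' | ⟨e, b⟩
  swap
  · rcases b <;> simp [gadLab] at hz
  have hab : a ≠ b' := fun hh => hne (by rw [hh])
  rcases hto a b' hab with h | h
  · rw [card_path_one R a b' h, card_path_zero R b' a (hnot _ _ h)]
  · rw [card_path_zero R a b' (hnot _ _ h), card_path_one R b' a h]

theorem gad_phi4 (h : IsStrictLinearOrderRel R) : phi4 (gadAdj R) (gadLab R) := by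
  obtain ⟨hirr, htr, -⟩ := h
  rintro ⟨x, y, w, e1, e2, e3⟩
  rw [gadEdge_iff] at e1 e2 e3
  obtain ⟨a, b, hab, rfl, rfl⟩ := e1
  obtain ⟨b2, c, hbc, hb, rfl⟩ := e2
  obtain ⟨c2, a2, hca, hc, ha⟩ := e3
  rw [GadV.inl_eq_inl] at hb hc ha
  subst hb; subst hc; subst ha
  exact hirr a (htr _ _ _ hab (htr _ _ _ hbc hca))

end GadgetSide

section Transport
variable {V₁ V₂ : Type} {E₁ : V₁ → V₁ → Prop} {lab₁ : V₁ → Fin 3 → Bool}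
  {E₂ : V₂ → V₂ → Prop} {lab₂ : V₂ → Fin 3 → Bool}
  (f : V₁ ≃ V₂) (hE : ∀ u v, E₁ u v ↔ E₂ (f u) (f v)) (hlab : ∀ v, lab₁ v = lab₂ (f v))

include hE hlab

lemma transport_path (u w v z : V₁) :
    GadPath E₁ lab₁ u w v z ↔ GadPath E₂ lab₂ (f u) (f w) (f v) (f z) := by
  unfold GadPath
  rw [hlab u, hlab w, hlab v, hlab z, hE u w, hE w v, hE v z]

lemma transport_edge (u z : V₁) :
    GadEdge E₁ lab₁ u z ↔ GadEdge E₂ lab₂ (f u) (f z) := by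
  constructor
  · rintro ⟨w, v, hp⟩
    exact ⟨f w, f v, (transport_path f hE hlab u w v z).1 hp⟩
  · rintro ⟨w, v, hp⟩
    refine ⟨f.symm w, f.symm v, (transport_path f hE hlab u _ _ z).2 ?_⟩
    simpa using hp

lemma transport_phi1 (h : phi1 lab₂) : phi1 lab₁ := fun v => by rw [hlab v]; exact h (f v)

lemma transport_phi2 [Fintype V₁] [Fintype V₂] (h : phi2 E₂ lab₂) : phi2 E₁ lab₁ := by
  obtain ⟨hA, hB, hC⟩ := h
  refine ⟨?_, ?_, fun u v hu hv he => hC (f u) (f v) (by rw [← hlab u, hu])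
    (by rw [← hlab v, hv]) ((hE u v).1 he)⟩
  · intro v hv
    obtain ⟨c1, c2, c3⟩ := hA (f v) (by rw [← hlab v, hv])
    refine ⟨?_, ?_, ?_⟩
    · rw [← c1]; exact Nat.card_congr (f.subtypeEquiv fun w => hE v w)
    · rw [← c2]
      exact Nat.card_congr (f.subtypeEquiv fun w => by rw [Set.mem_setOf_eq,
        Set.mem_setOf_eq, hE v w, hlab w])
    · rw [← c3]
      exact Nat.card_congr (f.subtypeEquiv fun w => by rw [Set.mem_setOf_eq,
        Set.mem_setOf_eq, hE v w, hlab w])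
  · intro v hv
    obtain ⟨c1, c2, c3⟩ := hB (f v) (by rw [← hlab v, hv])
    refine ⟨?_, ?_, ?_⟩
    · rw [← c1]; exact Nat.card_congr (f.subtypeEquiv fun w => hE v w)
    · rw [← c2]
      exact Nat.card_congr (f.subtypeEquiv fun w => by rw [Set.mem_setOf_eq,
        Set.mem_setOf_eq, hE v w, hlab w])
    · rw [← c3]
      exact Nat.card_congr (f.subtypeEquiv fun w => by rw [Set.mem_setOf_eq,
        Set.mem_setOf_eq, hE v w, hlab w])

lemma transport_phi3 [Fintype V₁] [Fintype V₂] (h : phi3 E₂ lab₂) : phi3 E₁ lab₁ := by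
  intro u z hu hz hne
  have h' := h (f u) (f z) (by rw [← hlab u, hu]) (by rw [← hlab z, hz])
    (fun hh => hne (f.injective hh))
  rw [← h']
  congr 1
  · exact Nat.card_congr ((f.prodCongr f).subtypeEquiv fun p =>
      transport_path f hE hlab u p.1 p.2 z)
  · exact Nat.card_congr ((f.prodCongr f).subtypeEquiv fun p =>
      transport_path f hE hlab z p.1 p.2 u)

lemma transport_phi4 (h : phi4 E₂ lab₂) : phi4 E₁ lab₁ := by
  rintro ⟨u, v, w, h1, h2, h3⟩
  exact h ⟨f u, f v, f w, (transport_edge f hE hlab u v).1 h1,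
    (transport_edge f hE hlab v w).1 h2, (transport_edge f hE hlab w u).1 h3⟩

end Transport

theorem stmt9_forward {V : Type} [Fintype V] (E : V → V → Prop) (lab : V → Fin 3 → Bool)
    (h : IsGadLin E lab) : phi1 lab ∧ phi2 E lab ∧ phi3 E lab ∧ phi4 E lab := by
  obtain ⟨U, instU, R, hlin, f, hE, hlab⟩ := h
  exact ⟨transport_phi1 f hE hlab (gad_phi1 R),
    transport_phi2 f hE hlab (gad_phi2 R),
    transport_phi3 f hE hlab (gad_phi3 R hlin),
    transport_phi4 f hE hlab (gad_phi4 R hlin)⟩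

lemma exists_unique_of_card_one {V : Type} [Finite V] {p : V → Prop}
    (h : Nat.card {w | p w} = 1) : ∃ x, p x ∧ ∀ y, p y → y = x := by
  rw [Nat.card_coe_set_eq, Set.ncard_eq_one] at h
  obtain ⟨a, ha⟩ := h
  refine ⟨a, ?_, fun y hy => ?_⟩
  · have : a ∈ {w | p w} := ha ▸ rfl
    exact this
  · have : y ∈ {w | p w} := hy
    rw [ha] at this
    exact this

lemma mem_pair_of_card_two {V : Type} [Finite V] {s : Set V} {a b : V}
    (h : Nat.card s = 2) (ha : a ∈ s) (hb : b ∈ s) (hab : a ≠ b) {y : V} (hy : y ∈ s) :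
    y = a ∨ y = b := by
  rw [Nat.card_coe_set_eq] at h
  have hpair : ({a, b} : Set V) = s := by
    refine Set.eq_of_subset_of_ncard_le ?_ ?_ (Set.toFinite s)
    · rintro x (rfl | rfl) <;> assumption
    · rw [h, Set.ncard_pair hab]
  rw [← hpair] at hy
  simpa using hy

/-- The map from `V` to the gadgetisation of the induced order on `P₁`-nodes. -/
noncomputable def bmap {V : Type} (E : V → V → Prop) (lab : V → Fin 3 → Bool)
    (u2 t2 z3 s3 : V → V)
    (bA : ∀ w, lab w 1 = true → lab (u2 w) 0 = true)
    (bB : ∀ w, lab w 1 = true → lab (z3 (t2 w)) 0 = true)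
    (bC : ∀ w, lab w 1 = true → GadEdge E lab (u2 w) (z3 (t2 w)))
    (bD : ∀ v, lab v 2 = true → lab (u2 (s3 v)) 0 = true)
    (bE : ∀ v, lab v 2 = true → lab (z3 v) 0 = true)
    (bF : ∀ v, lab v 2 = true → GadEdge E lab (u2 (s3 v)) (z3 v))
    (l2of : ∀ v, ¬ lab v 0 = true → ¬ lab v 1 = true → lab v 2 = true) :
    V → GadV (fun a b : {v : V // lab v 0 = true} => GadEdge E lab a.1 b.1) :=
  fun v =>
    if h0 : lab v 0 = true then Sum.inl ⟨v, h0⟩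
    else if hb : lab v 1 = true then
      Sum.inr (⟨(⟨u2 v, bA v hb⟩, ⟨z3 (t2 v), bB v hb⟩), bC v hb⟩, false)
    else
      Sum.inr (⟨(⟨u2 (s3 v), bD v (l2of v h0 hb)⟩, ⟨z3 v, bE v (l2of v h0 hb)⟩),
        bF v (l2of v h0 hb)⟩, true)

theorem stmt9_backward {V : Type} [Fintype V] (E : V → V → Prop) (lab : V → Fin 3 → Bool)
    (hsym : ∀ u v, E u v → E v u) (h1 : phi1 lab) (h2 : phi2 E lab) (h3 : phi3 E lab)
    (h4 : phi4 E lab) : IsGadLin E lab := by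
  classical
  obtain ⟨h2a, h2b, h2c⟩ := h2
  have lx1 : ∀ v, lab v 1 = true → lab v 0 = false ∧ lab v 2 = false := by
    intro v hv
    rcases h1 v with ⟨_, h, _⟩ | ⟨h0, _, h2'⟩ | ⟨_, h, _⟩
    · rw [hv] at h; exact absurd h (by simp)
    · exact ⟨h0, h2'⟩
    · rw [hv] at h; exact absurd h (by simp)
  have lx2 : ∀ v, lab v 2 = true → lab v 0 = false ∧ lab v 1 = false := by
    intro v hv
    rcases h1 v with ⟨_, _, h⟩ | ⟨_, _, h⟩ | ⟨h0, h1', _⟩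
    · rw [hv] at h; exact absurd h (by simp)
    · rw [hv] at h; exact absurd h (by simp)
    · exact ⟨h0, h1'⟩
  have lx0 : ∀ v, lab v 0 = true → lab v 1 = false ∧ lab v 2 = false := by
    intro v hv
    rcases h1 v with ⟨_, h1', h2'⟩ | ⟨h, _, _⟩ | ⟨h, _, _⟩
    · exact ⟨h1', h2'⟩
    · rw [hv] at h; exact absurd h (by simp)
    · rw [hv] at h; exact absurd h (by simp)
  have l2of : ∀ v, ¬ lab v 0 = true → ¬ lab v 1 = true → lab v 2 = true := by
    intro v hv hv'
    rcases h1 v with ⟨h, _, _⟩ | ⟨_, h, _⟩ | ⟨_, _, h⟩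
    · exact absurd h hv
    · exact absurd h hv'
    · exact h
  -- the unique neighbours
  have ex_u2 : ∀ w, ∃ x, lab w 1 = true →
      (E w x ∧ lab x 0 = true) ∧ ∀ y, E w y → lab y 0 = true → y = x := by
    intro w
    by_cases hw : lab w 1 = true
    · obtain ⟨x, hx, hux⟩ := exists_unique_of_card_one (h2a w hw).2.1
      exact ⟨x, fun _ => ⟨hx, fun y hy hy0 => hux y ⟨hy, hy0⟩⟩⟩
    · exact ⟨w, fun h => absurd h hw⟩
  choose u2 hu2 using ex_u2
  have ex_t2 : ∀ w, ∃ x, lab w 1 = true →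
      (E w x ∧ lab x 2 = true) ∧ ∀ y, E w y → lab y 2 = true → y = x := by
    intro w
    by_cases hw : lab w 1 = true
    · obtain ⟨x, hx, hux⟩ := exists_unique_of_card_one (h2a w hw).2.2
      exact ⟨x, fun _ => ⟨hx, fun y hy hy0 => hux y ⟨hy, hy0⟩⟩⟩
    · exact ⟨w, fun h => absurd h hw⟩
  choose t2 ht2 using ex_t2
  have ex_z3 : ∀ w, ∃ x, lab w 2 = true →
      (E w x ∧ lab x 0 = true) ∧ ∀ y, E w y → lab y 0 = true → y = x := by
    intro w
    by_cases hw : lab w 2 = true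
    · obtain ⟨x, hx, hux⟩ := exists_unique_of_card_one (h2b w hw).2.1
      exact ⟨x, fun _ => ⟨hx, fun y hy hy0 => hux y ⟨hy, hy0⟩⟩⟩
    · exact ⟨w, fun h => absurd h hw⟩
  choose z3 hz3 using ex_z3
  have ex_s3 : ∀ w, ∃ x, lab w 2 = true →
      (E w x ∧ lab x 1 = true) ∧ ∀ y, E w y → lab y 1 = true → y = x := by
    intro w
    by_cases hw : lab w 2 = true
    · obtain ⟨x, hx, hux⟩ := exists_unique_of_card_one (h2b w hw).2.2
      exact ⟨x, fun _ => ⟨hx, fun y hy hy0 => hux y ⟨hy, hy0⟩⟩⟩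
    · exact ⟨w, fun h => absurd h hw⟩
  choose s3 hs3 using ex_s3
  -- the two neighbours of P₂- and P₃-nodes
  have nbr2 : ∀ w, lab w 1 = true → ∀ y, E w y → y = u2 w ∨ y = t2 w := by
    intro w hw y hy
    have hne : u2 w ≠ t2 w := by
      intro h
      have h0 : lab (u2 w) 0 = true := ((hu2 w hw).1).2
      have h2' : lab (t2 w) 2 = true := ((ht2 w hw).1).2
      rw [h] at h0
      simp [(lx2 _ h2').1] at h0
    exact mem_pair_of_card_two (h2a w hw).1 ((hu2 w hw).1).1 ((ht2 w hw).1).1 hne hy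
  have nbr3 : ∀ w, lab w 2 = true → ∀ y, E w y → y = z3 w ∨ y = s3 w := by
    intro w hw y hy
    have hne : z3 w ≠ s3 w := by
      intro h
      have h0 : lab (z3 w) 0 = true := ((hz3 w hw).1).2
      have h1' : lab (s3 w) 1 = true := ((hs3 w hw).1).2
      rw [h] at h0
      simp [(lx1 _ h1').1] at h0
    exact mem_pair_of_card_two (h2b w hw).1 ((hz3 w hw).1).1 ((hs3 w hw).1).1 hne hy
  -- canonical paths through P₂- and P₃-nodes
  have path2 : ∀ w, lab w 1 = true → GadPath E lab (u2 w) w (t2 w) (z3 (t2 w)) := by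
    intro w hw
    have hu := (hu2 w hw).1
    have ht := (ht2 w hw).1
    have hz := (hz3 (t2 w) ht.2).1
    exact ⟨hu.2, hw, ht.2, hz.2, hsym _ _ hu.1, ht.1, hz.1⟩
  have path3 : ∀ v, lab v 2 = true → GadPath E lab (u2 (s3 v)) (s3 v) v (z3 v) := by
    intro v hv
    have hs := (hs3 v hv).1
    have hu := (hu2 (s3 v) hs.2).1
    have hz := (hz3 v hv).1
    exact ⟨hu.2, hs.2, hv, hz.2, hsym _ _ hu.1, hsym _ _ hs.1, hz.1⟩
  -- irreflexivity, asymmetry, totality and uniqueness of gadgetised edges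
  have hIrrE : ∀ a, ¬ GadEdge E lab a a := fun a h => h4 ⟨a, a, a, h, h, h⟩
  have hAsym : ∀ a b, lab a 0 = true → lab b 0 = true →
      GadEdge E lab a b → GadEdge E lab b a → False := by
    intro a b ha hb hab hba
    have hne : a ≠ b := by rintro rfl; exact hIrrE a hab
    have hc := h3 a b ha hb hne
    obtain ⟨w, v, hp⟩ := hab
    obtain ⟨w', v', hp'⟩ := hba
    have p1 : 0 < Nat.card {p : V × V | GadPath E lab a p.1 p.2 b} :=
      @Nat.card_pos _ ⟨⟨(w, v), hp⟩⟩ _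
    have p2 : 0 < Nat.card {p : V × V | GadPath E lab b p.1 p.2 a} :=
      @Nat.card_pos _ ⟨⟨(w', v'), hp'⟩⟩ _
    omega
  have hTot : ∀ a b, lab a 0 = true → lab b 0 = true → a ≠ b →
      GadEdge E lab a b ∨ GadEdge E lab b a := by
    intro a b ha hb hne
    by_contra hcon
    push_neg at hcon
    have hc := h3 a b ha hb hne
    have z1 : Nat.card {p : V × V | GadPath E lab a p.1 p.2 b} = 0 := by
      have he : {p : V × V | GadPath E lab a p.1 p.2 b} = ∅ :=
        Set.eq_empty_iff_forall_notMem.2 fun p hp => hcon.1 ⟨p.1, p.2, hp⟩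
      rw [Nat.card_coe_set_eq, he, Set.ncard_empty]
    have z2 : Nat.card {p : V × V | GadPath E lab b p.1 p.2 a} = 0 := by
      have he : {p : V × V | GadPath E lab b p.1 p.2 a} = ∅ :=
        Set.eq_empty_iff_forall_notMem.2 fun p hp => hcon.2 ⟨p.1, p.2, hp⟩
      rw [Nat.card_coe_set_eq, he, Set.ncard_empty]
    omega
  have pathU : ∀ a b w v w' v', GadPath E lab a w v b → GadPath E lab a w' v' b →
      w = w' ∧ v = v' := by
    intro a b w v w' v' hp hp'
    have ha : lab a 0 = true := hp.1
    have hb : lab b 0 = true := hp.2.2.2.1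
    have hne : a ≠ b := by rintro rfl; exact hIrrE a ⟨w, v, hp⟩
    have hc := h3 a b ha hb hne
    have hpos : 0 < Nat.card {p : V × V | GadPath E lab a p.1 p.2 b} :=
      @Nat.card_pos _ ⟨⟨(w, v), hp⟩⟩ _
    have hone : Nat.card {p : V × V | GadPath E lab a p.1 p.2 b} = 1 := by omega
    rw [Nat.card_coe_set_eq, Set.ncard_eq_one] at hone
    obtain ⟨c, hcs⟩ := hone
    have e1 : (w, v) ∈ {p : V × V | GadPath E lab a p.1 p.2 b} := hp
    have e2 : (w', v') ∈ {p : V × V | GadPath E lab a p.1 p.2 b} := hp'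
    rw [hcs, Set.mem_singleton_iff] at e1 e2
    have := e1.trans e2.symm
    exact ⟨congrArg Prod.fst this, congrArg Prod.snd this⟩
  -- assemble the ingredients of the gadgetisation map
  have bA : ∀ w, lab w 1 = true → lab (u2 w) 0 = true := fun w hw => ((hu2 w hw).1).2
  have bB : ∀ w, lab w 1 = true → lab (z3 (t2 w)) 0 = true :=
    fun w hw => ((hz3 (t2 w) ((ht2 w hw).1).2).1).2
  have bC : ∀ w, lab w 1 = true → GadEdge E lab (u2 w) (z3 (t2 w)) :=
    fun w hw => ⟨w, t2 w, path2 w hw⟩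
  have bD : ∀ v, lab v 2 = true → lab (u2 (s3 v)) 0 = true :=
    fun v hv => ((hu2 (s3 v) ((hs3 v hv).1).2).1).2
  have bE : ∀ v, lab v 2 = true → lab (z3 v) 0 = true := fun v hv => ((hz3 v hv).1).2
  have bF : ∀ v, lab v 2 = true → GadEdge E lab (u2 (s3 v)) (z3 v) :=
    fun v hv => ⟨s3 v, v, path3 v hv⟩
  set R : {v : V // lab v 0 = true} → {v : V // lab v 0 = true} → Prop :=
    fun a b => GadEdge E lab a.1 b.1 with hR
  set F : V → GadV R := bmap E lab u2 t2 z3 s3 bA bB bC bD bE bF l2of with hF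
  have g0 : ∀ v (h : lab v 0 = true), F v = Sum.inl ⟨v, h⟩ := by
    intro v h
    rw [hF]
    unfold bmap
    exact dif_pos h
  have g1 : ∀ v (h : lab v 1 = true),
      F v = Sum.inr (⟨(⟨u2 v, bA v h⟩, ⟨z3 (t2 v), bB v h⟩), bC v h⟩, false) := by
    intro v h
    have h0 : ¬ lab v 0 = true := by simp [(lx1 v h).1]
    rw [hF]
    unfold bmap
    exact (dif_neg h0).trans (dif_pos h)
  have g2 : ∀ v (h : lab v 2 = true),
      F v = Sum.inr (⟨(⟨u2 (s3 v), bD v h⟩, ⟨z3 v, bE v h⟩), bF v h⟩, true) := by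
    intro v h
    have h0 : ¬ lab v 0 = true := by simp [(lx2 v h).1]
    have hb : ¬ lab v 1 = true := by simp [(lx2 v h).2]
    rw [hF]
    unfold bmap
    exact (dif_neg h0).trans (dif_neg hb)
  -- F is bijective
  have hinj : Function.Injective F := by
    intro x y hxy
    rcases h1 x with hx | hx | hx <;> rcases h1 y with hy | hy | hy
    · rw [g0 x hx.1, g0 y hy.1, GadV.inl_eq_inl] at hxy
      exact congrArg Subtype.val hxy
    · rw [g0 x hx.1, g1 y hy.2.1] at hxy
      exact absurd hxy (GadV.inl_ne_inr R)
    · rw [g0 x hx.1, g2 y hy.2.2] at hxy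
      exact absurd hxy (GadV.inl_ne_inr R)
    · rw [g1 x hx.2.1, g0 y hy.1] at hxy
      exact absurd hxy (GadV.inr_ne_inl R)
    · rw [g1 x hx.2.1, g1 y hy.2.1, GadV.inr_eq_inr, Prod.ext_iff] at hxy
      have he := Subtype.ext_iff.1 hxy.1
      have ha : u2 x = u2 y := congrArg Subtype.val (congrArg Prod.fst he)
      have hb : z3 (t2 x) = z3 (t2 y) := congrArg Subtype.val (congrArg Prod.snd he)
      have p := path2 y hy.2.1
      rw [← ha, ← hb] at p
      exact (pathU _ _ _ _ _ _ (path2 x hx.2.1) p).1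
    · rw [g1 x hx.2.1, g2 y hy.2.2, GadV.inr_eq_inr, Prod.ext_iff] at hxy
      exact absurd hxy.2 (by simp)
    · rw [g2 x hx.2.2, g0 y hy.1] at hxy
      exact absurd hxy (GadV.inr_ne_inl R)
    · rw [g2 x hx.2.2, g1 y hy.2.1, GadV.inr_eq_inr, Prod.ext_iff] at hxy
      exact absurd hxy.2 (by simp)
    · rw [g2 x hx.2.2, g2 y hy.2.2, GadV.inr_eq_inr, Prod.ext_iff] at hxy
      have he := Subtype.ext_iff.1 hxy.1
      have ha : u2 (s3 x) = u2 (s3 y) := congrArg Subtype.val (congrArg Prod.fst he)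
      have hb : z3 x = z3 y := congrArg Subtype.val (congrArg Prod.snd he)
      have p := path3 y hy.2.2
      rw [← ha, ← hb] at p
      exact (pathU _ _ _ _ _ _ (path3 x hx.2.2) p).2
  have hsurj : Function.Surjective F := by
    rintro (a | ⟨⟨⟨aa, bb⟩, hRe⟩, b⟩)
    · exact ⟨a.1, g0 a.1 a.2⟩
    · obtain ⟨w, v, hp⟩ := hRe
      obtain ⟨hpa, hpw, hpv, hpb, e1, e2, e3⟩ := hp
      rcases b
      · refine ⟨w, ?_⟩
        rw [g1 w hpw]
        have q1 : aa.1 = u2 w := (hu2 w hpw).2 aa.1 (hsym _ _ e1) hpa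
        have q2 : v = t2 w := (ht2 w hpw).2 v e2 hpv
        have q3 : bb.1 = z3 v := (hz3 v hpv).2 bb.1 e3 hpb
        congr 1
        refine Prod.ext (Subtype.ext (Prod.ext ?_ ?_)) rfl
        · exact Subtype.ext q1.symm
        · rw [q2] at q3
          exact Subtype.ext q3.symm
      · refine ⟨v, ?_⟩
        rw [g2 v hpv]
        have q2 : w = s3 v := (hs3 v hpv).2 w (hsym _ _ e2) hpw
        have q1 : aa.1 = u2 (s3 v) := by
          rw [← q2]; exact (hu2 w hpw).2 aa.1 (hsym _ _ e1) hpa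
        have q3 : bb.1 = z3 v := (hz3 v hpv).2 bb.1 e3 hpb
        congr 1
        refine Prod.ext (Subtype.ext (Prod.ext ?_ ?_)) rfl
        · exact Subtype.ext q1.symm
        · exact Subtype.ext q3.symm
  refine ⟨{v : V // lab v 0 = true}, inferInstance, R, ⟨?_, ?_, ?_⟩,
    Equiv.ofBijective F ⟨hinj, hsurj⟩, ?_, ?_⟩
  · exact fun a h => hIrrE a.1 h
  · intro a b c hab hbc
    by_cases hac : a = c
    · subst hac
      exact absurd hbc (fun hh => hAsym a.1 b.1 a.2 b.2 hab hh)
    · rcases hTot a.1 c.1 a.2 c.2 (fun hh => hac (Subtype.ext hh)) with h | h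
      · exact h
      · exact absurd h4 (fun _ => h4 ⟨a.1, b.1, c.1, hab, hbc, h⟩)
  · exact fun a b hne => hTot a.1 b.1 a.2 b.2 (fun hh => hne (Subtype.ext hh))
  · -- edges
    intro x y
    change E x y ↔ gadAdj R (F x) (F y)
    rcases h1 x with hx | hx | hx <;> rcases h1 y with hy | hy | hy
    · rw [g0 x hx.1, g0 y hy.1]
      simp only [gadAdj]
      exact ⟨fun h => h2c x y hx.1 hy.1 h, False.elim⟩
    · rw [g0 x hx.1, g1 y hy.2.1]
      simp only [gadAdj]
      constructor
      · intro h
        exact Or.inl ⟨trivial, Subtype.ext ((hu2 y hy.2.1).2 x (hsym _ _ h) hx.1).symm⟩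
      · rintro (⟨-, h⟩ | ⟨h, -⟩)
        · have := congrArg Subtype.val h
          simp only at this
          rw [← this]
          exact hsym _ _ ((hu2 y hy.2.1).1).1
        · simp at h
    · rw [g0 x hx.1, g2 y hy.2.2]
      simp only [gadAdj]
      constructor
      · intro h
        exact Or.inr ⟨trivial, Subtype.ext ((hz3 y hy.2.2).2 x (hsym _ _ h) hx.1).symm⟩
      · rintro (⟨h, -⟩ | ⟨-, h⟩)
        · simp at h
        · have := congrArg Subtype.val h
          simp only at this
          rw [← this]
          exact hsym _ _ ((hz3 y hy.2.2).1).1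
    · rw [g1 x hx.2.1, g0 y hy.1]
      simp only [gadAdj]
      constructor
      · intro h
        exact Or.inl ⟨trivial, Subtype.ext ((hu2 x hx.2.1).2 y h hy.1).symm⟩
      · rintro (⟨-, h⟩ | ⟨h, -⟩)
        · have := congrArg Subtype.val h
          simp only at this
          rw [← this]
          exact ((hu2 x hx.2.1).1).1
        · simp at h
    · rw [g1 x hx.2.1, g1 y hy.2.1]
      simp only [gadAdj]
      constructor
      · intro h
        rcases nbr2 x hx.2.1 y h with rfl | rfl
        · exact absurd hy.2.1 (by simp [(lx0 _ (bA x hx.2.1)).1])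
        · exact absurd hy.2.1 (by simp [(lx2 _ ((ht2 x hx.2.1).1).2).2])
      · rintro ⟨-, h⟩
        exact absurd rfl h
    · rw [g1 x hx.2.1, g2 y hy.2.2]
      simp only [gadAdj]
      constructor
      · intro h
        have q2 : y = t2 x := (ht2 x hx.2.1).2 y h hy.2.2
        have q1 : x = s3 y := (hs3 y hy.2.2).2 x (hsym _ _ h) hx.2.1
        refine ⟨Subtype.ext (Prod.ext (Subtype.ext ?_) (Subtype.ext ?_)), by simp⟩
        · show u2 x = u2 (s3 y)
          rw [q1]
        · show z3 (t2 x) = z3 y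
          rw [q2]
      · rintro ⟨h, -⟩
        have he := Subtype.ext_iff.1 h
        have ha : u2 x = u2 (s3 y) := congrArg Subtype.val (congrArg Prod.fst he)
        have hb : z3 (t2 x) = z3 y := congrArg Subtype.val (congrArg Prod.snd he)
        have p := path3 y hy.2.2
        rw [← ha, ← hb] at p
        have hxy := (pathU _ _ _ _ _ _ (path2 x hx.2.1) p).2
        rw [← hxy]
        exact ((ht2 x hx.2.1).1).1
    · rw [g2 x hx.2.2, g0 y hy.1]
      simp only [gadAdj]
      constructor
      · intro h
        exact Or.inr ⟨trivial, Subtype.ext ((hz3 x hx.2.2).2 y h hy.1).symm⟩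
      · rintro (⟨h, -⟩ | ⟨-, h⟩)
        · simp at h
        · have := congrArg Subtype.val h
          simp only at this
          rw [← this]
          exact ((hz3 x hx.2.2).1).1
    · rw [g2 x hx.2.2, g1 y hy.2.1]
      simp only [gadAdj]
      constructor
      · intro h
        have q2 : x = t2 y := (ht2 y hy.2.1).2 x (hsym _ _ h) hx.2.2
        have q1 : y = s3 x := (hs3 x hx.2.2).2 y h hy.2.1
        refine ⟨Subtype.ext (Prod.ext (Subtype.ext ?_) (Subtype.ext ?_)), by simp⟩
        · show u2 (s3 x) = u2 y
          rw [q1]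
        · show z3 x = z3 (t2 y)
          rw [q2]
      · rintro ⟨h, -⟩
        have he := Subtype.ext_iff.1 h
        have ha : u2 (s3 x) = u2 y := congrArg Subtype.val (congrArg Prod.fst he)
        have hb : z3 x = z3 (t2 y) := congrArg Subtype.val (congrArg Prod.snd he)
        have p := path3 x hx.2.2
        rw [ha, hb] at p
        have hxy := (pathU _ _ _ _ _ _ (path2 y hy.2.1) p).2
        rw [← hxy]
        exact hsym _ _ ((ht2 y hy.2.1).1).1
    · rw [g2 x hx.2.2, g2 y hy.2.2]
      simp only [gadAdj]
      constructor
      · intro h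
        rcases nbr3 x hx.2.2 y h with rfl | rfl
        · exact absurd hy.2.2 (by simp [(lx0 _ (bE x hx.2.2)).2])
        · exact absurd hy.2.2 (by simp [(lx1 _ ((hs3 x hx.2.2).1).2).2])
      · rintro ⟨-, h⟩
        exact absurd rfl h
  · -- labels
    intro v
    rcases h1 v with hv | hv | hv
    · change lab v = gadLab R (F v)
      rw [g0 v hv.1]
      funext i
      fin_cases i <;> simp [gadLab, hv.1, hv.2.1, hv.2.2]
    · change lab v = gadLab R (F v)
      rw [g1 v hv.2.1]
      funext i
      fin_cases i <;> simp [gadLab, hv.1, hv.2.1, hv.2.2]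
    · change lab v = gadLab R (F v)
      rw [g2 v hv.2.2]
      funext i
      fin_cases i <;> simp [gadLab, hv.1, hv.2.1, hv.2.2]

/-- a finite undirected labelled graph of dimension 3 is isomorphic to the
gadgetisation of a strict linear order iff it satisfies φ₁, φ₂, φ₃ and φ₄. -/
theorem stmt9 {V : Type} [Fintype V] (E : V → V → Prop) (lab : V → Fin 3 → Bool)
    (hsym : ∀ u v, E u v → E v u) (hirr : ∀ v, ¬ E v v) :
    IsGadLin E lab ↔ (phi1 lab ∧ phi2 E lab ∧ phi3 E lab ∧ phi4 E lab) :=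
  ⟨fun h => stmt9_forward E lab h,
   fun ⟨h1, h2, h3, h4⟩ => stmt9_backward E lab hsym h1 h2 h3 h4⟩
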